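/- Let h > 0, u, v ∈ ℝ, g > 0, and suppose u² + v² < g h (subcritical flow). Then the elemental energy e(h, u, v) = (1/2) h (u² + v²) + (1/2) g h², viewed as a function of the variables (h, u, v), has positive-definite Hessian at (h, u, v); i.e., e is strictly convex in a neighborhood of every subcritical state. -/

import Mathlib

private lemma quad_pos (g h u v x0 x1 x2 : ℝ) (hg : 0 < g)
    (hsub : u ^ 2 + v ^ 2 < g * h) (hx : ¬ (x0 = 0 ∧ x1 = 0 ∧ x2 = 0)) :
    0 < g * x0 ^ 2 + h * x1 ^ 2 + h * x2 ^ 2 + 2 * u * x0 * x1 + 2 * v * x0 * x2 := by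
  by_cases h12 : x1 = 0 ∧ x2 = 0
  · obtain ⟨e1, e2⟩ := h12
    have hx0 : x0 ≠ 0 := by tauto
    subst e1; subst e2
    have := sq_pos_of_ne_zero hx0
    nlinarith [mul_pos hg this]
  · have hpos : 0 < x1 ^ 2 + x2 ^ 2 := by
      rcases not_and_or.mp h12 with h1 | h2
      · nlinarith [sq_pos_of_ne_zero h1, sq_nonneg x2]
      · nlinarith [sq_pos_of_ne_zero h2, sq_nonneg x1]
    nlinarith [sq_nonneg (g * x0 + u * x1 + v * x2), sq_nonneg (u * x2 - v * x1),
      mul_pos (sub_pos.mpr hsub) hpos]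

private lemma mix_mem (a b x y c δ : ℝ) (ha : 0 ≤ a) (hb : 0 ≤ b) (hab : a + b = 1)
    (hx : |x - c| < δ) (hy : |y - c| < δ) : |a * x + b * y - c| < δ := by
  rcases ha.eq_or_lt with heq | ha'
  · have hb1 : b = 1 := by linarith
    rw [← heq, hb1]
    simpa using hy
  · rw [abs_lt] at *
    have hrw : a * x + b * y - c = a * (x - c) + b * (y - c) := by linear_combination c * hab
    have hδ : a * δ + b * δ = δ := by linear_combination δ * hab
    rw [hrw]
    have e1 := mul_lt_mul_of_pos_left hx.1 ha'
    have e2 := mul_lt_mul_of_pos_left hx.2 ha'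
    have e3 := mul_le_mul_of_nonneg_left hy.1.le hb
    have e4 := mul_le_mul_of_nonneg_left hy.2.le hb
    rw [mul_neg] at e1 e3
    constructor <;> linarith

private lemma key_ineq (g a b h1 u1 v1 h2 u2 v2 : ℝ) (hg : 0 < g) (ha : 0 < a) (hb : 0 < b)
    (hab : a + b = 1)
    (hsub : (u1 + u2) ^ 2 + (v1 + v2) ^ 2 < 4 * g * (a * h1 + b * h2))
    (hne : ¬(h1 = h2 ∧ u1 = u2 ∧ v1 = v2)) :
    (1/2) * (a * h1 + b * h2) * ((a * u1 + b * u2) ^ 2 + (a * v1 + b * v2) ^ 2)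
      + (1/2) * g * (a * h1 + b * h2) ^ 2
    < a * ((1/2) * h1 * (u1 ^ 2 + v1 ^ 2) + (1/2) * g * h1 ^ 2)
      + b * ((1/2) * h2 * (u2 ^ 2 + v2 ^ 2) + (1/2) * g * h2 ^ 2) := by
  have hQ : 0 < g * (h1 - h2) ^ 2
      + (h1 - h2) * ((u1 + u2) * (u1 - u2) + (v1 + v2) * (v1 - v2))
      + (a * h1 + b * h2) * ((u1 - u2) ^ 2 + (v1 - v2) ^ 2) := by
    by_cases huv : u1 = u2 ∧ v1 = v2
    · obtain ⟨e1, e2⟩ := huv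
      subst e1; subst e2
      have hne' : h1 - h2 ≠ 0 := fun hc => hne ⟨by linarith [sub_eq_zero.mp hc], rfl, rfl⟩
      have := sq_pos_of_ne_zero hne'
      nlinarith [mul_pos hg this]
    · have hW : 0 < (u1 - u2) ^ 2 + (v1 - v2) ^ 2 := by
        rcases not_and_or.mp huv with h1' | h2'
        · have : u1 - u2 ≠ 0 := sub_ne_zero.mpr h1'
          nlinarith [sq_pos_of_ne_zero this, sq_nonneg (v1 - v2)]
        · have : v1 - v2 ≠ 0 := sub_ne_zero.mpr h2'
          nlinarith [sq_pos_of_ne_zero this, sq_nonneg (u1 - u2)]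
      nlinarith [sq_nonneg (2 * g * (h1 - h2) + (u1 + u2) * (u1 - u2) + (v1 + v2) * (v1 - v2)),
        sq_nonneg ((u1 + u2) * (v1 - v2) - (v1 + v2) * (u1 - u2)),
        mul_pos (sub_pos.mpr hsub) hW, hg]
  have hb' : b = 1 - a := by linarith
  subst hb'
  nlinarith [mul_pos (mul_pos ha hb) hQ]

theorem elemental_energy_strictly_convex (g h u v : ℝ) (hg : 0 < g) (hh : 0 < h)
    (hsub : u ^ 2 + v ^ 2 < g * h) :
    Matrix.PosDef (!![g, u, v; u, h, 0; v, 0, h] : Matrix (Fin 3) (Fin 3) ℝ) ∧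
    ∃ s : Set (ℝ × ℝ × ℝ), s ∈ nhds (h, u, v) ∧
      StrictConvexOn ℝ s
        (fun p : ℝ × ℝ × ℝ =>
          (1 / 2) * p.1 * (p.2.1 ^ 2 + p.2.2 ^ 2) + (1 / 2) * g * p.1 ^ 2) := by
  constructor
  · rw [Matrix.posDef_iff_dotProduct_mulVec]; constructor
    · ext i j
      fin_cases i <;> fin_cases j <;>
        simp [Matrix.conjTranspose, Matrix.IsHermitian, Matrix.vecHead, Matrix.vecTail,
          Matrix.transpose]
    · intro x hx
      have hx' : ¬ (x 0 = 0 ∧ x 1 = 0 ∧ x 2 = 0) := by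
        intro ⟨a, b, c⟩
        apply hx
        ext i; fin_cases i <;> assumption
      have := quad_pos g h u v (x 0) (x 1) (x 2) hg hsub hx'
      simp [dotProduct, Matrix.mulVec, Fin.sum_univ_three]
      nlinarith [this]
  · -- choose δ
    set ε : ℝ := g * h - (u ^ 2 + v ^ 2) with hε
    have hεpos : 0 < ε := by simp [hε]; linarith
    set C : ℝ := 2 * (|u| + |v|) + g + 2 with hC
    have hCpos : 0 < C := by positivity
    set δ : ℝ := min 1 (ε / (2 * C)) with hδdef
    have hδpos : 0 < δ := lt_min one_pos (by positivity)
    have hδ1 : δ ≤ 1 := min_le_left _ _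
    have hδ2 : 2 * C * δ ≤ ε := by
      have := min_le_right 1 (ε / (2 * C))
      calc 2 * C * δ ≤ 2 * C * (ε / (2 * C)) := by
            apply mul_le_mul_of_nonneg_left this (by positivity)
        _ = ε := by field_simp
    refine ⟨{p : ℝ × ℝ × ℝ | |p.1 - h| < δ ∧ |p.2.1 - u| < δ ∧ |p.2.2 - v| < δ}, ?_, ?_, ?_⟩
    · -- neighborhood
      apply Filter.mem_of_superset (Metric.ball_mem_nhds _ hδpos)
      intro p hp
      rw [Metric.mem_ball, Prod.dist_eq] at hp
      have h1 := lt_of_le_of_lt (le_max_left _ _) hp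
      have h2 := lt_of_le_of_lt (le_max_right _ _) hp
      rw [Prod.dist_eq] at h2
      have h3 := lt_of_le_of_lt (le_max_left _ _) h2
      have h4 := lt_of_le_of_lt (le_max_right _ _) h2
      rw [Real.dist_eq] at h1 h3 h4
      exact ⟨h1, h3, h4⟩
    · -- convexity of the set
      intro p hp q hq a b ha hb hab
      simp only [Set.mem_setOf_eq, Prod.fst_add, Prod.snd_add, Prod.smul_fst, Prod.smul_snd,
        smul_eq_mul] at *
      exact ⟨mix_mem a b p.1 q.1 h δ ha hb hab hp.1 hq.1,
        mix_mem a b p.2.1 q.2.1 u δ ha hb hab hp.2.1 hq.2.1,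
        mix_mem a b p.2.2 q.2.2 v δ ha hb hab hp.2.2 hq.2.2⟩
    · -- strict inequality
      intro p hp q hq hpq a b ha hb hab
      simp only [Set.mem_setOf_eq] at hp hq
      simp only [Prod.fst_add, Prod.snd_add, Prod.smul_fst, Prod.smul_snd, smul_eq_mul]
      have hne : ¬(p.1 = q.1 ∧ p.2.1 = q.2.1 ∧ p.2.2 = q.2.2) := by
        intro ⟨e1, e2, e3⟩
        apply hpq
        rw [Prod.ext_iff, Prod.ext_iff]
        exact ⟨e1, e2, e3⟩
      apply key_ineq g a b p.1 p.2.1 p.2.2 q.1 q.2.1 q.2.2 hg ha hb hab ?_ hne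
      -- subcriticality of midpoints
      have habs_u : |p.2.1 + q.2.1| ≤ 2 * |u| + 2 * δ := by
        calc |p.2.1 + q.2.1| = |(p.2.1 - u) + (q.2.1 - u) + 2 * u| := by ring_nf
          _ ≤ |(p.2.1 - u) + (q.2.1 - u)| + |2 * u| := abs_add_le _ _
          _ ≤ |p.2.1 - u| + |q.2.1 - u| + |2 * u| := by
              have := abs_add_le (p.2.1 - u) (q.2.1 - u); linarith
          _ ≤ 2 * |u| + 2 * δ := by
              rw [abs_mul]; simp only [abs_two]
              linarith [hp.2.1, hq.2.1]
      have habs_v : |p.2.2 + q.2.2| ≤ 2 * |v| + 2 * δ := by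
        calc |p.2.2 + q.2.2| = |(p.2.2 - v) + (q.2.2 - v) + 2 * v| := by ring_nf
          _ ≤ |(p.2.2 - v) + (q.2.2 - v)| + |2 * v| := abs_add_le _ _
          _ ≤ |p.2.2 - v| + |q.2.2 - v| + |2 * v| := by
              have := abs_add_le (p.2.2 - v) (q.2.2 - v); linarith
          _ ≤ 2 * |v| + 2 * δ := by
              rw [abs_mul]; simp only [abs_two]
              linarith [hp.2.2, hq.2.2]
      have hsq_u : (p.2.1 + q.2.1) ^ 2 ≤ (2 * |u| + 2 * δ) ^ 2 := by
        rw [← sq_abs]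
        exact pow_le_pow_left₀ (abs_nonneg _) habs_u 2
      have hsq_v : (p.2.2 + q.2.2) ^ 2 ≤ (2 * |v| + 2 * δ) ^ 2 := by
        rw [← sq_abs]
        exact pow_le_pow_left₀ (abs_nonneg _) habs_v 2
      have hH : h - δ < a * p.1 + b * q.1 := by
        have h1 : h - δ < p.1 := by have := (abs_lt.mp hp.1).1; linarith
        have h2 : h - δ < q.1 := by have := (abs_lt.mp hq.1).1; linarith
        calc h - δ = a * (h - δ) + b * (h - δ) := by linear_combination (δ - h) * hab
          _ < a * p.1 + b * q.1 :=
            add_lt_add (mul_lt_mul_of_pos_left h1 ha) (mul_lt_mul_of_pos_left h2 hb)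
      have hfinal : (2 * |u| + 2 * δ) ^ 2 + (2 * |v| + 2 * δ) ^ 2 < 4 * g * (h - δ) := by
        have hδδ : δ ^ 2 ≤ δ := by
          calc δ ^ 2 = δ * δ := sq δ
            _ ≤ δ * 1 := mul_le_mul_of_nonneg_left hδ1 hδpos.le
            _ = δ := mul_one δ
        have e1 : (2 * |u| + 2 * δ) ^ 2 + (2 * |v| + 2 * δ) ^ 2
            = 4 * u ^ 2 + 4 * v ^ 2 + 8 * (|u| + |v|) * δ + 8 * δ ^ 2 := by
          linear_combination 4 * sq_abs u + 4 * sq_abs v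
        have hcδ : C * δ < ε := by linarith [hδ2, hεpos]
        have e2 : 2 * (|u| + |v|) * δ + g * δ + 2 * δ < ε := by
          calc 2 * (|u| + |v|) * δ + g * δ + 2 * δ = C * δ := by rw [hC]; ring
            _ < ε := hcδ
        rw [e1]
        linarith [e2, hδδ, hε]
      calc (p.2.1 + q.2.1) ^ 2 + (p.2.2 + q.2.2) ^ 2
          ≤ (2 * |u| + 2 * δ) ^ 2 + (2 * |v| + 2 * δ) ^ 2 := add_le_add hsq_u hsq_v
        _ < 4 * g * (h - δ) := hfinal
        _ ≤ 4 * g * (a * p.1 + b * q.1) :=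
            mul_le_mul_of_nonneg_left hH.le (by positivity)
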